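/- For n ≥ 4 and any nonzero ring R, the ring T_n(R) of upper triangular n×n matrices over R is not VNL. -/

import Mathlib

/-- An element `a` of a ring is (von Neumann) regular if `a = a * x * a` for some `x`. -/
def IsVNRegular {R : Type*} [Ring R] (a : R) : Prop := ∃ x : R, a = a * x * a

/-- A ring is VNL if for every `a`, either `a` or `1 - a` is regular. -/
def IsVNLRing (R : Type*) [Ring R] : Prop :=
  ∀ a : R, IsVNRegular a ∨ IsVNRegular (1 - a)

/-- The ring of upper triangular `n × n` matrices over `R`, as a subring of `Mₙ(R)`. -/
def upperTriangularSubring (n : ℕ) (R : Type*) [Ring R] :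
    Subring (Matrix (Fin n) (Fin n) R) where
  carrier := {M | ∀ i j, j < i → M i j = 0}
  zero_mem' := fun _ _ _ => rfl
  one_mem' := fun _ _ h => Matrix.one_apply_ne h.ne'
  add_mem' := fun ha hb i j h => by
    simp [Matrix.add_apply, ha i j h, hb i j h]
  neg_mem' := fun ha i j h => by simp [Matrix.neg_apply, ha i j h]
  mul_mem' := fun {A B} ha hb i j h => by
    rw [Matrix.mul_apply]
    refine Finset.sum_eq_zero fun k _ => ?_
    rcases lt_or_ge k i with hk | hk
    · rw [ha i k hk, zero_mul]
    · rw [hb k j (lt_of_lt_of_le h hk), mul_zero]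

/-- For `n ≥ 4` and a nonzero ring `R`, the upper triangular matrix ring `Tₙ(R)` is
not VNL. -/
theorem upperTriangular_not_isVNL {R : Type*} [Ring R] [Nontrivial R] {n : ℕ}
    (hn : 4 ≤ n) : ¬ IsVNLRing (upperTriangularSubring n R) := by
  intro hVNL
  have h0 : (0 : ℕ) < n := by omega
  have h1 : (1 : ℕ) < n := by omega
  have h2 : (2 : ℕ) < n := by omega
  have h3 : (3 : ℕ) < n := by omega
  set i0 : Fin n := ⟨0, h0⟩ with hi0
  set i1 : Fin n := ⟨1, h1⟩ with hi1
  set i2 : Fin n := ⟨2, h2⟩ with hi2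
  set i3 : Fin n := ⟨3, h3⟩ with hi3
  have ne01 : i0 ≠ i1 := by simp [hi0, hi1, Fin.ext_iff]
  have ne02 : i0 ≠ i2 := by simp [hi0, hi2, Fin.ext_iff]
  have ne03 : i0 ≠ i3 := by simp [hi0, hi3, Fin.ext_iff]
  have ne12 : i1 ≠ i2 := by simp [hi1, hi2, Fin.ext_iff]
  have ne13 : i1 ≠ i3 := by simp [hi1, hi3, Fin.ext_iff]
  have ne23 : i2 ≠ i3 := by simp [hi2, hi3, Fin.ext_iff]
  set A : Matrix (Fin n) (Fin n) R := fun i j =>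
    if i = i0 ∧ j = i1 then 1
    else if i = i2 ∧ j = i3 then -1
    else if (i = i2 ∧ j = i2) ∨ (i = i3 ∧ j = i3) then 1 else 0 with hA
  have hmem : A ∈ upperTriangularSubring n R := by
    intro i j hij
    simp only [hA]
    split_ifs with c1 c2 c3
    · exfalso
      rw [c1.1, c1.2] at hij
      exact absurd hij (by simp [hi0, hi1, Fin.lt_def])
    · exfalso
      rw [c2.1, c2.2] at hij
      exact absurd hij (by simp [hi2, hi3, Fin.lt_def])
    · exfalso
      rcases c3 with ⟨ha', hb'⟩ | ⟨ha', hb'⟩ <;>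
        · rw [ha', hb'] at hij; exact absurd hij (lt_irrefl _)
    · rfl
  have row0 : ∀ k, A i0 k = if k = i1 then (1 : R) else 0 := by
    intro k; simp [hA, ne02, ne03]
  have col1 : ∀ k, A k i1 = if k = i0 then (1 : R) else 0 := by
    intro k; simp [hA, ne12, ne13]
  have row2 : ∀ k, ((1 : Matrix (Fin n) (Fin n) R) - A) i2 k
      = if k = i3 then (1 : R) else 0 := by
    intro k
    rcases eq_or_ne k i3 with rfl | hk3
    · rw [Matrix.sub_apply]; simp [Matrix.sub_apply, Matrix.one_apply, hA, ne02.symm, ne23]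
    · rcases eq_or_ne k i2 with rfl | hk2
      · rw [Matrix.sub_apply]; simp [Matrix.sub_apply, Matrix.one_apply, hA, ne02.symm, ne23.symm, hk3]
      · rw [Matrix.sub_apply]; simp [Matrix.sub_apply, Matrix.one_apply, hA, ne02.symm, hk3, hk2,
          Ne.symm hk2, fun h : i3 = k => hk3 h.symm]
  have col3 : ∀ k, ((1 : Matrix (Fin n) (Fin n) R) - A) k i3
      = if k = i2 then (1 : R) else 0 := by
    intro k
    rcases eq_or_ne k i2 with rfl | hk2
    · rw [Matrix.sub_apply]; simp [Matrix.sub_apply, Matrix.one_apply, hA, ne02.symm, ne23, ne23.symm]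
    · rcases eq_or_ne k i3 with rfl | hk3
      · rw [Matrix.sub_apply]; simp [Matrix.sub_apply, Matrix.one_apply, hA, ne03.symm, ne23.symm, hk2]
      · rw [Matrix.sub_apply]; simp [Matrix.sub_apply, Matrix.one_apply, hA, hk2, hk3, ne13.symm, ne23.symm]
  have hxmem := fun (x : upperTriangularSubring n R) => x.2
  rcases hVNL ⟨A, hmem⟩ with ⟨x, hx⟩ | ⟨x, hx⟩
  · have hx' : A = A * (x : Matrix (Fin n) (Fin n) R) * A := congrArg Subtype.val hx
    have h01 : A i0 i1 = (A * (x : Matrix (Fin n) (Fin n) R) * A) i0 i1 :=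
      congrFun (congrFun hx' i0) i1
    have hR : (A * (x : Matrix (Fin n) (Fin n) R) * A) i0 i1 = 0 := by
      rw [Matrix.mul_apply]
      have : ∀ k ∈ Finset.univ, (A * (x : Matrix (Fin n) (Fin n) R)) i0 k * A k i1
          = if k = i0 then (A * (x : Matrix (Fin n) (Fin n) R)) i0 k else 0 := by
        intro k _
        rw [col1 k]
        split_ifs <;> simp
      rw [Finset.sum_congr rfl this, Finset.sum_ite_eq' Finset.univ i0]
      simp only [Finset.mem_univ, if_true, Matrix.mul_apply]
      have : ∀ k ∈ Finset.univ, A i0 k * (x : Matrix (Fin n) (Fin n) R) k i0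
          = if k = i1 then (x : Matrix (Fin n) (Fin n) R) k i0 else 0 := by
        intro k _
        rw [row0 k]
        split_ifs <;> simp
      rw [Finset.sum_congr rfl this, Finset.sum_ite_eq' Finset.univ i1]
      simp only [Finset.mem_univ, if_true]
      exact x.2 i1 i0 (by simp [hi0, hi1, Fin.lt_def])
    rw [hR] at h01
    have : A i0 i1 = 1 := by simp [hA]
    exact one_ne_zero (this ▸ h01.symm ▸ rfl : (1 : R) = 0)
  · set B : Matrix (Fin n) (Fin n) R := 1 - A with hB
    have hx' : B = B * (x : Matrix (Fin n) (Fin n) R) * B := by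
      have := congrArg Subtype.val hx
      simpa [hB] using this
    have h23 : B i2 i3 = (B * (x : Matrix (Fin n) (Fin n) R) * B) i2 i3 :=
      congrFun (congrFun hx' i2) i3
    have hR : (B * (x : Matrix (Fin n) (Fin n) R) * B) i2 i3 = 0 := by
      rw [Matrix.mul_apply]
      have : ∀ k ∈ Finset.univ, (B * (x : Matrix (Fin n) (Fin n) R)) i2 k * B k i3
          = if k = i2 then (B * (x : Matrix (Fin n) (Fin n) R)) i2 k else 0 := by
        intro k _
        rw [show B k i3 = if k = i2 then (1:R) else 0 from col3 k]
        split_ifs <;> simp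
      rw [Finset.sum_congr rfl this, Finset.sum_ite_eq' Finset.univ i2]
      simp only [Finset.mem_univ, if_true, Matrix.mul_apply]
      have : ∀ k ∈ Finset.univ, B i2 k * (x : Matrix (Fin n) (Fin n) R) k i2
          = if k = i3 then (x : Matrix (Fin n) (Fin n) R) k i2 else 0 := by
        intro k _
        rw [show B i2 k = if k = i3 then (1:R) else 0 from row2 k]
        split_ifs <;> simp
      rw [Finset.sum_congr rfl this, Finset.sum_ite_eq' Finset.univ i3]
      simp only [Finset.mem_univ, if_true]
      exact x.2 i3 i2 (by simp [hi2, hi3, Fin.lt_def])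
    rw [hR] at h23
    have : B i2 i3 = 1 := by
      rw [hB, Matrix.sub_apply]; simp [hB, Matrix.sub_apply, Matrix.one_apply, hA, ne23, ne02.symm]
    exact one_ne_zero (this ▸ h23.symm ▸ rfl : (1 : R) = 0)
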